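/- Let p be an odd prime, n a positive integer, and D the derivation on ℚ[c_1,c_2,…] with D(c_k) = (n-k+1)c_{k-1}, c_0=1. Assume the denominators n-p-2+j (3 ≤ j ≤ (p+1)/2) are nonzero and set B_k = ∏_{j=k}^{(p+1)/2}(n-j)/(n-p-2+j). Define X_2 = c_{(p+3)/2}^2 + ∑_{k=3}^{(p+1)/2} (-1)^{(p+1)/2-k+1}·2B_k·c_{p-k+3} c_k. Then D(X_2) = (-1)^{(p+1)/2}·2·B_3·(n-2)·c_p c_2. -/

import Mathlib

open MvPolynomial

/-- Second formula of the "three boundaries" lemma: with `D` the derivation on `ℚ[c₁,c₂,…]`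
given by `D(cₖ) = (n-k+1)c_{k-1}`, `c₀ = 1`, and `Bₖ = ∏_{j=k}^{(p+1)/2}(n-j)/(n-p-2+j)`,
the element `X₂ = c_{(p+3)/2}² + ∑_{k=3}^{(p+1)/2} (-1)^{(p+1)/2-k+1}·2Bₖ·c_{p-k+3}cₖ`
satisfies `D(X₂) = (-1)^{(p+1)/2}·2·B₃·(n-2)·c_p c₂`. -/
theorem stmt_11 (p n : ℕ) (hp : p.Prime) (hodd : Odd p) (hn : 0 < n)
    (hden : ∀ j : ℕ, 3 ≤ j → j ≤ (p + 1) / 2 → ((n : ℚ) - p - 2 + j) ≠ 0)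
    (B : ℕ → ℚ)
    (hB : ∀ k : ℕ, B k = ∏ j ∈ Finset.Icc k ((p + 1) / 2),
      ((n : ℚ) - j) / ((n : ℚ) - p - 2 + j))
    (D : Derivation ℚ (MvPolynomial ℕ ℚ) (MvPolynomial ℕ ℚ))
    (hD1 : D (X 1) = C (n : ℚ))
    (hDk : ∀ k : ℕ, 2 ≤ k → D (X k) = C ((n : ℚ) - k + 1) * X (k - 1)) :
    D (X ((p + 3) / 2) ^ 2
        + ∑ k ∈ Finset.Icc 3 ((p + 1) / 2),
            C ((-1 : ℚ) ^ ((p + 1) / 2 - k + 1) * 2 * B k) * (X (p - k + 3) * X k)) =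
      C ((-1 : ℚ) ^ ((p + 1) / 2) * 2 * B 3 * ((n : ℚ) - 2)) * (X p * X 2) := by
  obtain ⟨t, rfl⟩ := hodd
  have ht1 : 1 ≤ t := by have := hp.two_le; omega
  have hm1 : (2 * t + 1 + 1) / 2 = t + 1 := by omega
  have hm3 : (2 * t + 1 + 3) / 2 = t + 2 := by omega
  simp only [hm1, hm3] at hden hB ⊢
  clear hp hD1
  -- basic facts
  have hDC : ∀ (c : ℚ) (x : MvPolynomial ℕ ℚ), D (C c * x) = C c * D x := by
    intro c x
    rw [← smul_eq_C_mul, ← smul_eq_C_mul, D.map_smul]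
  have hDmul : ∀ a b : ℕ, D (X a * X b) = X a * D (X b) + X b * D (X a) := by
    intro a b
    rw [D.leibniz]
    simp [smul_eq_mul]
  have hsign : ∀ k : ℕ, 2 ≤ k → k ≤ t + 2 → ((-1 : ℚ)) ^ (t + 2 - k) = (-1) ^ (t + k) := by
    intro k h2 hk
    have h : t + k = (t + 2 - k) + 2 * (k - 1) := by omega
    rw [h, pow_add, pow_mul]
    norm_num
  have hQ : ∀ k : ℕ, 3 ≤ k → k ≤ t + 1 →
      B k * ((n : ℚ) - (2 * t + 1 : ℕ) - 2 + k) = B (k + 1) * ((n : ℚ) - k) := by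
    intro k h3 hk
    have hd := hden k h3 hk
    have e1 : B k = ((n : ℚ) - k) / ((n : ℚ) - (2 * t + 1 : ℕ) - 2 + k) * B (k + 1) := by
      rw [hB k, hB (k + 1), ← Finset.Ico_add_one_right_eq_Icc,
        Finset.prod_eq_prod_Ico_succ_bot (by omega : k < t + 1 + 1), Finset.Ico_add_one_right_eq_Icc]
    rw [e1]
    calc ((n : ℚ) - k) / ((n : ℚ) - (2 * t + 1 : ℕ) - 2 + k) * B (k + 1)
          * ((n : ℚ) - (2 * t + 1 : ℕ) - 2 + k)
        = B (k + 1) * (((n : ℚ) - k) / ((n : ℚ) - (2 * t + 1 : ℕ) - 2 + k)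
            * ((n : ℚ) - (2 * t + 1 : ℕ) - 2 + k)) := by ring
      _ = B (k + 1) * ((n : ℚ) - k) := by rw [div_mul_cancel₀ _ hd]
  have hBtop : B (t + 2) = 1 := by
    rw [hB, Finset.Icc_eq_empty (by omega), Finset.prod_empty]
  -- the telescoping family
  set g : ℕ → MvPolynomial ℕ ℚ := fun k =>
    C ((-1 : ℚ) ^ (t + k) * 2 * B (k + 1) * ((n : ℚ) - k)) * (X (2 * t + 1 - k + 2) * X k)
    with hg
  have hterm : ∀ k ∈ Finset.Icc 3 (t + 1),
      D (C ((-1 : ℚ) ^ (t + 1 - k + 1) * 2 * B k) * (X (2 * t + 1 - k + 3) * X k))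
        = g k - g (k - 1) := by
    intro k hk
    simp only [Finset.mem_Icc] at hk
    obtain ⟨h3, hk1⟩ := hk
    have hA : 2 ≤ 2 * t + 1 - k + 3 := by omega
    rw [hDC, hDmul, hDk k (by omega), hDk _ hA]
    have i1 : 2 * t + 1 - k + 3 - 1 = 2 * t + 1 - k + 2 := by omega
    have i2 : 2 * t + 1 - (k - 1) + 2 = 2 * t + 1 - k + 3 := by omega
    have i3 : (k - 1) + 1 = k := by omega
    have c1 : ((2 * t + 1 - k + 3 : ℕ) : ℚ) = (2 * t + 1 : ℕ) - (k : ℚ) + 3 := by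
      push_cast [Nat.sub_add_cancel, Nat.cast_sub (by omega : k ≤ 2 * t + 1)]
      ring
    have c2 : ((k - 1 : ℕ) : ℚ) = (k : ℚ) - 1 := by
      push_cast [Nat.cast_sub (by omega : 1 ≤ k)]
      ring
    rw [hg]
    simp only [i1, i2, i3, c1, c2]
    have hs1 : ((-1 : ℚ)) ^ (t + 1 - k + 1) = (-1) ^ (t + k) := by
      have h : t + 1 - k + 1 = t + 2 - k := by omega
      rw [h, hsign k (by omega) (by omega)]
    have hs2 : ((-1 : ℚ)) ^ (t + (k - 1)) = -(-1) ^ (t + k) := by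
      have h : t + k = (t + (k - 1)) + 1 := by omega
      rw [h, pow_succ]
      ring
    rw [hs1, hs2]
    have hq := hQ k h3 hk1
    -- now a polynomial identity with coefficient identity hq
    have E : (C (B k * ((n : ℚ) - (2 * t + 1 : ℕ) - 2 + k)) : MvPolynomial ℕ ℚ)
        = C (B (k + 1) * ((n : ℚ) - k)) := by rw [hq]
    simp only [map_mul, map_add, map_sub, map_neg, map_one, map_pow, map_ofNat] at E ⊢
    linear_combination (-1 : MvPolynomial ℕ ℚ) ^ (t + k) * (2 : MvPolynomial ℕ ℚ) *
      (X (2 * t + 1 - k + 2) * X k) * E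
  have hsq : D (X (t + 2) ^ 2) = -g (t + 1) := by
    rw [sq, D.leibniz, hDk (t + 2) (by omega)]
    have i1 : t + 2 - 1 = t + 1 := by omega
    have i2 : 2 * t + 1 - (t + 1) + 2 = t + 2 := by omega
    have s1 : ((-1 : ℚ)) ^ (t + (t + 1)) = -1 := by
      have h : t + (t + 1) = 2 * t + 1 := by omega
      rw [h]
      exact Odd.neg_one_pow ⟨t, by ring⟩
    rw [hg]
    simp only [i1, i2, hBtop, s1, smul_eq_mul]
    have c3 : ((t + 2 : ℕ) : ℚ) = (t : ℚ) + 2 := by push_cast; ring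
    have c4 : ((t + 1 : ℕ) : ℚ) = (t : ℚ) + 1 := by push_cast; ring
    rw [c3, c4]
    simp only [map_mul, map_add, map_sub, map_neg, map_one, map_pow, map_ofNat]
    ring
  have htel : ∑ k ∈ Finset.Icc 3 (t + 1), (g k - g (k - 1)) = g (t + 1) - g 2 := by
    rw [← Finset.Ico_add_one_right_eq_Icc, Finset.sum_Ico_eq_sum_range]
    have h1 : t + 1 + 1 - 3 = t - 1 := by omega
    rw [h1]
    have h2 : ∀ i ∈ Finset.range (t - 1), g (3 + i) - g (3 + i - 1)
        = g ((i + 1) + 2) - g (i + 2) := by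
      intro i _
      have a : 3 + i = (i + 1) + 2 := by omega
      have b : 3 + i - 1 = i + 2 := by omega
      rw [b, a]
    rw [Finset.sum_congr rfl h2, Finset.sum_range_sub (fun i => g (i + 2)) (t - 1)]
    have h3 : t - 1 + 2 = t + 1 := by omega
    rw [h3]
  have hfinal : -g 2 = C ((-1 : ℚ) ^ (t + 1) * 2 * B 3 * ((n : ℚ) - 2)) * (X (2 * t + 1) * X 2) := by
    rw [hg]
    have i1 : 2 * t + 1 - 2 + 2 = 2 * t + 1 := by omega
    have s1 : ((-1 : ℚ)) ^ (t + 2) = -(-1 : ℚ) ^ (t + 1) := by rw [pow_succ]; ring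
    have c5 : ((2 : ℕ) : ℚ) = 2 := by norm_num
    simp only [i1, s1, c5]
    simp only [map_mul, map_add, map_sub, map_neg, map_one, map_pow, map_ofNat]
    ring
  calc D (X (t + 2) ^ 2 + ∑ k ∈ Finset.Icc 3 (t + 1),
          C ((-1 : ℚ) ^ (t + 1 - k + 1) * 2 * B k) * (X (2 * t + 1 - k + 3) * X k))
      = D (X (t + 2) ^ 2) + ∑ k ∈ Finset.Icc 3 (t + 1),
          D (C ((-1 : ℚ) ^ (t + 1 - k + 1) * 2 * B k) * (X (2 * t + 1 - k + 3) * X k)) := by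
        rw [map_add, map_sum]
    _ = -g (t + 1) + ∑ k ∈ Finset.Icc 3 (t + 1), (g k - g (k - 1)) := by
        rw [hsq, Finset.sum_congr rfl hterm]
    _ = -g (t + 1) + (g (t + 1) - g 2) := by rw [htel]
    _ = -g 2 := by ring
    _ = C ((-1 : ℚ) ^ (t + 1) * 2 * B 3 * ((n : ℚ) - 2)) * (X (2 * t + 1) * X 2) := hfinal
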